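/- Let 0 < q < 1, let λ > 0 be real, and let ν be a real number with ν > −1. Then for all real x with 0 < x and λ·x·(1−q) < q, the q-derivative at x of the function G(x) := ((qx)^{ν+1}/λ)·( −x²λ²(1−q)²/q² ; q²)_∞ · J_{ν+1}^{(1)}(λx/q | q²) equals x^{ν+1}·(−x²λ²(1−q)²; q²)_∞ · J_ν^{(1)}(λx | q²). -/

import Mathlib

set_option maxHeartbeats 2000000

/-- The Jackson `q`-derivative `(D_q f)(x) = (f(x) - f(qx)) / ((1-q)x)`. -/
noncomputable def qDeriv (q : ℝ) (f : ℝ → ℝ) (x : ℝ) : ℝ :=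
  (f x - f (q * x)) / ((1 - q) * x)

/-- The finite q-shifted factorial `(z; q)_n`. -/
noncomputable def qPoch (z q : ℝ) (n : ℕ) : ℝ :=
  ∏ k ∈ Finset.range n, (1 - z * q ^ k)

/-- The infinite q-shifted factorial `(z; q)_∞`. -/
noncomputable def qPochInf (z q : ℝ) : ℝ :=
  ∏' k : ℕ, (1 - z * q ^ k)

/-- The first Jackson q-Bessel function in the notation
`J_ν^{(1)}(λx | q²) = J_ν^{(1)}(2λx(1−q); q²)`. -/
noncomputable def J1 (q ν lam x : ℝ) : ℝ :=
  (qPochInf (q ^ (2 * ν + 2)) (q ^ 2) / qPochInf (q ^ 2) (q ^ 2)) *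
    ∑' n : ℕ, ((-1 : ℝ) ^ n * (lam * x * (1 - q)) ^ (2 * (n : ℝ) + ν)) /
      (qPoch (q ^ 2) (q ^ 2) n *
        ∏ j ∈ Finset.range n, (1 - q ^ (2 * ν + 2 + 2 * (j : ℝ))))

lemma aux_factor_pos {A z : ℝ} (hA0 : 0 < A) (hA1 : A < 1) (hz : z < 1) (k : ℕ) :
    0 < 1 - z * A ^ k := by
  rcases le_or_gt z 0 with h | h
  · have : 0 < A ^ k := pow_pos hA0 k
    nlinarith
  · have h1 : A ^ k ≤ 1 := pow_le_one₀ hA0.le hA1.le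
    have h2 : 0 < A ^ k := pow_pos hA0 k
    nlinarith

lemma aux_abs_log_le {y m : ℝ} (hm : 0 < m) (hm1 : m ≤ 1) (hy : m ≤ y) :
    |Real.log y| ≤ |y - 1| / m := by
  have hy0 : 0 < y := lt_of_lt_of_le hm hy
  have key : |y - 1| ≤ |y - 1| / m := by
    rw [le_div_iff₀ hm]
    nlinarith [abs_nonneg (y - 1)]
  rw [abs_le]
  constructor
  · have h := Real.log_le_sub_one_of_pos (x := y⁻¹) (by positivity)
    rw [Real.log_inv] at h
    have h2 : y⁻¹ - 1 = (1 - y) / y := by field_simp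
    have h3 : (1 - y) / y ≤ |y - 1| / m := by
      rcases le_or_gt 1 y with hc | hc
      · have e1 : (1 - y) / y ≤ 0 := div_nonpos_of_nonpos_of_nonneg (by linarith) hy0.le
        have e2 : 0 ≤ |y - 1| / m := by positivity
        linarith
      · have h4 : (1 - y) / y ≤ (1 - y) / m := by
          apply div_le_div_of_nonneg_left (by linarith) hm hy
        have h5 : (1 - y) ≤ |y - 1| := by
          rw [abs_sub_comm]; exact le_abs_self _
        have h6 : (1 - y) / m ≤ |y - 1| / m := by gcongr
        linarith
    linarith
  · have h := Real.log_le_sub_one_of_pos hy0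
    have h5 : y - 1 ≤ |y - 1| := le_abs_self _
    linarith

lemma aux_log_summable {A z : ℝ} (hA0 : 0 < A) (hA1 : A < 1) (hz : z < 1) :
    Summable (fun k : ℕ => Real.log (1 - z * A ^ k)) := by
  set m : ℝ := min 1 (1 - z) with hm
  have hm0 : 0 < m := lt_min one_pos (by linarith)
  have hm1 : m ≤ 1 := min_le_left _ _
  apply Summable.of_norm_bounded (g := fun k => (|z| / m) * A ^ k)
  · exact (summable_geometric_of_lt_one hA0.le hA1).mul_left _
  · intro k
    have hpos := aux_factor_pos hA0 hA1 hz k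
    have hAk0 : 0 < A ^ k := pow_pos hA0 k
    have hAk1 : A ^ k ≤ 1 := pow_le_one₀ hA0.le hA1.le
    have hy : m ≤ 1 - z * A ^ k := by
      rcases le_or_gt z 0 with h | h
      · have : 0 ≤ -z * A ^ k := mul_nonneg (by linarith) hAk0.le
        calc m ≤ 1 := hm1
        _ ≤ 1 - z * A ^ k := by nlinarith
      · have : z * A ^ k ≤ z := by nlinarith
        calc m ≤ 1 - z := min_le_right _ _
        _ ≤ 1 - z * A ^ k := by linarith
    have := aux_abs_log_le hm0 hm1 hy
    rw [Real.norm_eq_abs]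
    refine this.trans ?_
    have : |1 - z * A ^ k - 1| = |z| * A ^ k := by
      rw [show 1 - z * A ^ k - 1 = -(z * A ^ k) by ring, abs_neg, abs_mul, abs_of_pos hAk0]
    rw [this]
    exact le_of_eq (by ring)

lemma aux_multipliable {A z : ℝ} (hA0 : 0 < A) (hA1 : A < 1) (hz : z < 1) :
    Multipliable (fun k : ℕ => 1 - z * A ^ k) :=
  Real.multipliable_of_summable_log (fun k => aux_factor_pos hA0 hA1 hz k)
    (aux_log_summable hA0 hA1 hz)

lemma aux_qPoch_pos {A z : ℝ} (hA0 : 0 < A) (hA1 : A < 1) (hz : z < 1) (n : ℕ) :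
    0 < qPoch z A n :=
  Finset.prod_pos fun k _ => aux_factor_pos hA0 hA1 hz k

lemma aux_qPoch_lb {A z : ℝ} (hA0 : 0 < A) (hA1 : A < 1) (hz : z < 1) :
    ∃ δ : ℝ, 0 < δ ∧ ∀ n, δ ≤ qPoch z A n := by
  refine ⟨Real.exp (-(∑' k : ℕ, |Real.log (1 - z * A ^ k)|)), Real.exp_pos _, fun n => ?_⟩
  have hsum : Summable (fun k : ℕ => |Real.log (1 - z * A ^ k)|) :=
    (aux_log_summable hA0 hA1 hz).abs
  have h1 : qPoch z A n = Real.exp (∑ k ∈ Finset.range n, Real.log (1 - z * A ^ k)) := by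
    rw [Real.exp_sum]
    exact (Finset.prod_congr rfl fun k _ =>
      (Real.exp_log (aux_factor_pos hA0 hA1 hz k)).symm)
  rw [h1]
  apply Real.exp_le_exp.2
  have h2 : ∑ k ∈ Finset.range n, |Real.log (1 - z * A ^ k)| ≤
      ∑' k : ℕ, |Real.log (1 - z * A ^ k)| :=
    Summable.sum_le_tsum _ (fun k _ => abs_nonneg _) hsum
  have h3 : -∑ k ∈ Finset.range n, |Real.log (1 - z * A ^ k)| ≤
      ∑ k ∈ Finset.range n, Real.log (1 - z * A ^ k) := by
    rw [← Finset.sum_neg_distrib]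
    apply Finset.sum_le_sum
    intro k _
    exact neg_abs_le _
  linarith

lemma aux_qPochInf_pos {A z : ℝ} (hA0 : 0 < A) (hA1 : A < 1) (hz : z < 1) :
    0 < qPochInf z A := by
  have h2 := Real.rexp_tsum_eq_tprod (f := fun k : ℕ => 1 - z * A ^ k)
    (fun k => aux_factor_pos hA0 hA1 hz k)
    (aux_log_summable hA0 hA1 hz)
  rw [qPochInf, ← h2]
  exact Real.exp_pos _

lemma aux_tprod_shift {A z : ℝ} (hA0 : 0 < A) (hA1 : A < 1) (hz : z < 1) :
    qPochInf z A = (1 - z) * qPochInf (z * A) A := by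
  have hzA : z * A < 1 := by
    rcases le_or_gt z 0 with h | h
    · nlinarith
    · nlinarith
  have hm : Multipliable (fun k : ℕ => 1 - z * A ^ (k + 1)) := by
    have := aux_multipliable (z := z * A) hA0 hA1 hzA
    apply this.congr
    intro k
    ring
  rw [qPochInf]
  rw [tprod_eq_zero_mul' hm]
  congr 1
  · simp
  · rw [qPochInf]
    apply tprod_congr
    intro k
    ring

lemma qPoch_zero (z A : ℝ) : qPoch z A 0 = 1 := by simp [qPoch]

lemma qPoch_succ (z A : ℝ) (n : ℕ) :
    qPoch z A (n + 1) = qPoch z A n * (1 - z * A ^ n) :=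
  Finset.prod_range_succ _ _

lemma qPoch_succ' (z A : ℝ) (n : ℕ) :
    qPoch z A (n + 1) = (1 - z) * qPoch (z * A) A n := by
  rw [qPoch, Finset.prod_range_succ']
  simp only [pow_zero, mul_one]
  rw [mul_comm, qPoch]
  congr 1
  exact Finset.prod_congr rfl fun k _ => by ring

lemma summable_J {w μ : ℝ} (hw0 : 0 < w) (hw1 : w < 1) {P : ℕ → ℝ} {δ : ℝ}
    (hδ : 0 < δ) (hP : ∀ n, δ ≤ P n) :
    Summable (fun n : ℕ => ((-1 : ℝ) ^ n * w ^ (2 * (n : ℝ) + μ)) / P n) := by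
  apply Summable.of_norm_bounded (g := fun n => (w ^ μ / δ) * (w ^ 2) ^ n)
  · apply Summable.mul_left
    apply summable_geometric_of_lt_one (by positivity)
    nlinarith
  · intro n
    have hPn : 0 < P n := lt_of_lt_of_le hδ (hP n)
    have hT : (0:ℝ) < w ^ (2 * (n : ℝ) + μ) := Real.rpow_pos_of_pos hw0 _
    rw [Real.norm_eq_abs, abs_div, abs_mul, abs_pow, abs_neg, abs_one, one_pow, one_mul,
      abs_of_pos hT, abs_of_pos hPn]
    have h1 : w ^ (2 * (n : ℝ) + μ) = (w ^ 2) ^ n * w ^ μ := by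
      rw [Real.rpow_add hw0]
      congr 1
      rw [show (2 : ℝ) * (n : ℝ) = ((2 * n : ℕ) : ℝ) by push_cast; ring,
        Real.rpow_natCast, pow_mul]
    rw [h1]
    calc (w ^ 2) ^ n * w ^ μ / P n ≤ (w ^ 2) ^ n * w ^ μ / δ := by
          apply div_le_div_of_nonneg_left (by positivity) hδ (hP n)
    _ = w ^ μ / δ * (w ^ 2) ^ n := by ring

lemma key (q lam ν x : ℝ) (hq : 0 < q) (hq1 : q < 1) (hlam : 0 < lam) (hν : -1 < ν)
    (hx : 0 < x) (hxq : lam * x * (1 - q) < q) :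
    q ^ (ν + 1) * (1 + (lam * x * (1 - q)) ^ 2 / q ^ 2) *
        (∑' n : ℕ, ((-1 : ℝ) ^ n * (lam * x * (1 - q) / q) ^ (2 * (n : ℝ) + (ν + 1))) /
          (qPoch (q ^ 2) (q ^ 2) n * qPoch (q ^ (2 * (ν + 1) + 2)) (q ^ 2) n))
      - q ^ (ν + 1) * q ^ (ν + 1) *
        (∑' n : ℕ, ((-1 : ℝ) ^ n * (lam * x * (1 - q)) ^ (2 * (n : ℝ) + (ν + 1))) /
          (qPoch (q ^ 2) (q ^ 2) n * qPoch (q ^ (2 * (ν + 1) + 2)) (q ^ 2) n))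
      = (lam * x * (1 - q)) * (1 - q ^ (2 * ν + 2)) *
        (∑' n : ℕ, ((-1 : ℝ) ^ n * (lam * x * (1 - q)) ^ (2 * (n : ℝ) + ν)) /
          (qPoch (q ^ 2) (q ^ 2) n * qPoch (q ^ (2 * ν + 2)) (q ^ 2) n)) := by
  have h1q : 0 < 1 - q := by linarith
  set u := lam * x * (1 - q) with hu
  have hu0 : 0 < u := by positivity
  have huq : u < q := hxq
  have hu1 : u < 1 := huq.trans hq1
  have hq2 : (0:ℝ) < q ^ 2 := by positivity
  have hq21 : q ^ 2 < 1 := by nlinarith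
  have hQ : (0:ℝ) < q ^ (ν + 1) := Real.rpow_pos_of_pos hq _
  have hr0 : (0:ℝ) < q ^ (2 * ν + 2) := Real.rpow_pos_of_pos hq _
  have hr1 : q ^ (2 * ν + 2) < 1 := Real.rpow_lt_one hq.le hq1 (by linarith)
  have hr'0 : (0:ℝ) < q ^ (2 * (ν + 1) + 2) := Real.rpow_pos_of_pos hq _
  have hr'1 : q ^ (2 * (ν + 1) + 2) < 1 := Real.rpow_lt_one hq.le hq1 (by linarith)
  have hrr' : q ^ (2 * ν + 2) * q ^ 2 = q ^ (2 * (ν + 1) + 2) := by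
    rw [← Real.rpow_natCast q 2, ← Real.rpow_add hq]
    norm_num
    ring_nf
  have hQQ : q ^ (ν + 1) * q ^ (ν + 1) = q ^ (2 * ν + 2) := by
    rw [← Real.rpow_add hq]
    congr 1
    ring
  have huq0 : 0 < u / q := by positivity
  have huq1 : u / q < 1 := (div_lt_one hq).2 huq
  -- lower bounds for denominators
  obtain ⟨δ1, hδ1, hL1⟩ := aux_qPoch_lb hq2 hq21 hq21
  obtain ⟨δ2, hδ2, hL2⟩ := aux_qPoch_lb hq2 hq21 hr'1
  obtain ⟨δ3, hδ3, hL3⟩ := aux_qPoch_lb hq2 hq21 hr1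
  have hD' : ∀ n, δ1 * δ2 ≤ qPoch (q ^ 2) (q ^ 2) n * qPoch (q ^ (2 * (ν + 1) + 2)) (q ^ 2) n :=
    fun n => mul_le_mul (hL1 n) (hL2 n) hδ2.le (hδ1.le.trans (hL1 n))
  have hD : ∀ n, δ1 * δ3 ≤ qPoch (q ^ 2) (q ^ 2) n * qPoch (q ^ (2 * ν + 2)) (q ^ 2) n :=
    fun n => mul_le_mul (hL1 n) (hL3 n) hδ3.le (hδ1.le.trans (hL1 n))
  set a : ℕ → ℝ := fun n => ((-1 : ℝ) ^ n * (u / q) ^ (2 * (n : ℝ) + (ν + 1))) /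
      (qPoch (q ^ 2) (q ^ 2) n * qPoch (q ^ (2 * (ν + 1) + 2)) (q ^ 2) n) with ha
  set b : ℕ → ℝ := fun n => ((-1 : ℝ) ^ n * u ^ (2 * (n : ℝ) + (ν + 1))) /
      (qPoch (q ^ 2) (q ^ 2) n * qPoch (q ^ (2 * (ν + 1) + 2)) (q ^ 2) n) with hb
  set c : ℕ → ℝ := fun n => ((-1 : ℝ) ^ n * u ^ (2 * (n : ℝ) + ν)) /
      (qPoch (q ^ 2) (q ^ 2) n * qPoch (q ^ (2 * ν + 2)) (q ^ 2) n) with hc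
  have sa : Summable a := summable_J huq0 huq1 (mul_pos hδ1 hδ2) hD'
  have sb : Summable b := summable_J hu0 hu1 (mul_pos hδ1 hδ2) hD'
  have sc : Summable c := summable_J hu0 hu1 (mul_pos hδ1 hδ3) hD
  set ψ : ℕ → ℝ := fun n =>
    Nat.rec (motive := fun _ => ℝ) 0 (fun m _ => q ^ (ν + 1) * (u ^ 2 / q ^ 2) * a m) n with hψ
  have hψ0 : ψ 0 = 0 := rfl
  have hψs : ∀ m, ψ (m + 1) = q ^ (ν + 1) * (u ^ 2 / q ^ 2) * a m := fun m => rfl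
  have hψsum1 : Summable (fun n => ψ (n + 1)) :=
    (sa.mul_left _).congr fun m => (hψs m).symm
  have hψsum : Summable ψ := (summable_nat_add_iff 1).1 hψsum1
  have step1 : q ^ (ν + 1) * (u ^ 2 / q ^ 2) * (∑' n, a n) = ∑' n, ψ n := by
    calc q ^ (ν + 1) * (u ^ 2 / q ^ 2) * (∑' n, a n)
        = ∑' n, q ^ (ν + 1) * (u ^ 2 / q ^ 2) * a n := tsum_mul_left.symm
      _ = ∑' n, ψ (n + 1) := tsum_congr fun n => (hψs n).symm
      _ = ∑' n, ψ n := by rw [tsum_eq_zero_add' hψsum1, hψ0, zero_add]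
  -- pointwise identity
  have pointwise : ∀ n, q ^ (ν + 1) * a n + ψ n - q ^ (ν + 1) * q ^ (ν + 1) * b n
      = u * (1 - q ^ (2 * ν + 2)) * c n := by
    intro n
    cases n with
    | zero =>
      have ea : a 0 = (u / q) ^ (ν + 1) := by
        rw [ha]; norm_num [qPoch_zero]
      have eb : b 0 = u ^ (ν + 1) := by
        rw [hb]; norm_num [qPoch_zero]
      have ec : c 0 = u ^ ν := by
        rw [hc]; norm_num [qPoch_zero]
      rw [ea, eb, ec, hψ0, hQQ, Real.div_rpow hu0.le hq.le]
      have e1 : q ^ (ν + 1) * (u ^ (ν + 1) / q ^ (ν + 1)) = u ^ (ν + 1) := by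
        field_simp
      rw [e1]
      have huu : u ^ ν * u = u ^ (ν + 1) := (Real.rpow_add_one hu0.ne' ν).symm
      linear_combination (q ^ (2 * ν + 2) - 1) * huu
    | succ m =>
      rw [hψs m]
      simp only [ha, hb, hc]
      simp only [Real.div_rpow hu0.le hq.le]
      have hu_succ : u ^ (2 * ((m + 1 : ℕ) : ℝ) + (ν + 1))
          = u ^ (2 * (m : ℝ) + (ν + 1)) * u ^ 2 := by
        rw [show 2 * ((m + 1 : ℕ) : ℝ) + (ν + 1) = (2 * (m : ℝ) + (ν + 1)) + ((2 : ℕ) : ℝ) by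
          push_cast; ring, Real.rpow_add hu0, Real.rpow_natCast]
      have hu_succν : u ^ (2 * ((m + 1 : ℕ) : ℝ) + ν)
          = u ^ (2 * (m : ℝ) + (ν + 1)) * u := by
        rw [show 2 * ((m + 1 : ℕ) : ℝ) + ν = (2 * (m : ℝ) + (ν + 1)) + 1 by
          push_cast; ring, Real.rpow_add_one hu0.ne']
      have hq_m : q ^ (2 * (m : ℝ) + (ν + 1)) = q ^ (ν + 1) * (q ^ 2) ^ m := by
        rw [show 2 * (m : ℝ) + (ν + 1) = (ν + 1) + ((2 * m : ℕ) : ℝ) by push_cast; ring,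
          Real.rpow_add hq, Real.rpow_natCast, pow_mul]
      have hq_m1 : q ^ (2 * ((m + 1 : ℕ) : ℝ) + (ν + 1))
          = q ^ (ν + 1) * ((q ^ 2) ^ m * q ^ 2) := by
        rw [show 2 * ((m + 1 : ℕ) : ℝ) + (ν + 1) = (ν + 1) + ((2 * (m + 1) : ℕ) : ℝ) by
          push_cast; ring, Real.rpow_add hq, Real.rpow_natCast, pow_mul, pow_succ]
      have hr'eq : q ^ (2 * (ν + 1) + 2) = q ^ (ν + 1) * q ^ (ν + 1) * q ^ 2 := by
        rw [← hrr', ← hQQ]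
      have hPA : qPoch (q ^ 2) (q ^ 2) m ≠ 0 := (aux_qPoch_pos hq2 hq21 hq21 m).ne'
      have hPR' : qPoch (q ^ (2 * (ν + 1) + 2)) (q ^ 2) m ≠ 0 :=
        (aux_qPoch_pos hq2 hq21 hr'1 m).ne'
      have hf1pos : (0:ℝ) < 1 - q ^ 2 * (q ^ 2) ^ m := by
        nlinarith [pow_pos hq2 m, pow_le_one₀ hq2.le hq21.le (n := m)]
      have hf1 : (1 - q ^ 2 * (q ^ 2) ^ m) ≠ 0 := hf1pos.ne'
      have hf2pos : (0:ℝ) < 1 - q ^ (2 * (ν + 1) + 2) * (q ^ 2) ^ m := by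
        nlinarith [pow_pos hq2 m, pow_le_one₀ hq2.le hq21.le (n := m)]
      have hf2 : (1 - q ^ (2 * (ν + 1) + 2) * (q ^ 2) ^ m) ≠ 0 := hf2pos.ne'
      rw [qPoch_succ (q ^ 2) (q ^ 2) m, qPoch_succ (q ^ (2 * (ν + 1) + 2)) (q ^ 2) m,
        qPoch_succ' (q ^ (2 * ν + 2)) (q ^ 2) m, hrr', hu_succ, hu_succν, hq_m, hq_m1,
        ← hQQ]
      rw [hr'eq] at hf2 hPR' ⊢
      simp only [pow_succ (-1 : ℝ)]
      have hKne : ((q:ℝ) ^ 2) ^ m ≠ 0 := (pow_pos hq2 m).ne'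
      have hQne : (q:ℝ) ^ (ν + 1) ≠ 0 := hQ.ne'
      have hune : u ≠ 0 := hu0.ne'
      clear_value u
      generalize u ^ (2 * (m : ℝ) + (ν + 1)) = V
      generalize hRg : qPoch (q ^ (ν + 1) * q ^ (ν + 1) * q ^ 2) (q ^ 2) m = Rm
      rw [hRg] at hPR'
      generalize hPg : qPoch (q ^ 2) (q ^ 2) m = Pm
      rw [hPg] at hPA
      generalize hKg : ((q:ℝ) ^ 2) ^ m = K
      rw [hKg] at hKne hf1 hf2
      have h1r : (1:ℝ) - q ^ (ν + 1) * q ^ (ν + 1) ≠ 0 := by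
        rw [hQQ]; exact (sub_pos.2 hr1).ne'
      generalize hQg : (q:ℝ) ^ (ν + 1) = Qv
      rw [hQg] at hQne hf2 h1r
      have hf2' : 1 - Qv ^ 2 * K * q ^ 2 ≠ 0 := by convert hf2 using 2; ring
      have h1r' : 1 - Qv ^ 2 ≠ 0 := by convert h1r using 2; ring
      have hf1' : 1 - K * q ^ 2 ≠ 0 := by convert hf1 using 2; ring
      field_simp [hPA, hPR', hf1, hf2, hQne, hq.ne', hKne, h1r, hf2', h1r', hf1']
      ring
  -- final assembly
  calc q ^ (ν + 1) * (1 + u ^ 2 / q ^ 2) * (∑' n, a n)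
        - q ^ (ν + 1) * q ^ (ν + 1) * (∑' n, b n)
      = q ^ (ν + 1) * (∑' n, a n) + q ^ (ν + 1) * (u ^ 2 / q ^ 2) * (∑' n, a n)
        - q ^ (ν + 1) * q ^ (ν + 1) * (∑' n, b n) := by ring
    _ = q ^ (ν + 1) * (∑' n, a n) + (∑' n, ψ n)
        - q ^ (ν + 1) * q ^ (ν + 1) * (∑' n, b n) := by rw [step1]
    _ = ∑' n, (q ^ (ν + 1) * a n + ψ n - q ^ (ν + 1) * q ^ (ν + 1) * b n) := by
        rw [← tsum_mul_left (a := q ^ (ν + 1)), ← tsum_mul_left (a := q ^ (ν + 1) * q ^ (ν + 1)),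
          ← Summable.tsum_add (sa.mul_left _) hψsum,
          ← Summable.tsum_sub ((sa.mul_left (q ^ (ν + 1))).add hψsum) (sb.mul_left _)]
    _ = ∑' n, u * (1 - q ^ (2 * ν + 2)) * c n := tsum_congr pointwise
    _ = u * (1 - q ^ (2 * ν + 2)) * (∑' n, c n) := tsum_mul_left

lemma J1_eq (q lam μ y : ℝ) (hq : 0 < q) :
    J1 q μ lam y = (qPochInf (q ^ (2 * μ + 2)) (q ^ 2) / qPochInf (q ^ 2) (q ^ 2)) *
      ∑' n : ℕ, ((-1 : ℝ) ^ n * (lam * y * (1 - q)) ^ (2 * (n : ℝ) + μ)) /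
        (qPoch (q ^ 2) (q ^ 2) n * qPoch (q ^ (2 * μ + 2)) (q ^ 2) n) := by
  rw [J1]
  congr 1
  apply tsum_congr
  intro n
  congr 2
  rw [qPoch]
  apply Finset.prod_congr rfl
  intro j _
  congr 1
  rw [Real.rpow_add hq]
  congr 1
  rw [show (2 : ℝ) * (j : ℝ) = ((2 * j : ℕ) : ℝ) by push_cast; ring,
    Real.rpow_natCast, pow_mul]

/-- `∫ x^{ν+1}(−x²λ²(1−q)²;q²)_∞ J_ν^{(1)}(λx|q²) d_q x
  = ((qx)^{ν+1}/λ)(−x²λ²(1−q)²/q²;q²)_∞ J_{ν+1}^{(1)}(λx/q|q²)`. -/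
theorem qIntegral_J1_nu (q lam ν : ℝ) (hq : 0 < q) (hq1 : q < 1)
    (hlam : 0 < lam) (hν : -1 < ν) :
    ∀ x : ℝ, 0 < x → lam * x * (1 - q) < q →
      qDeriv q
        (fun t => (q * t) ^ (ν + 1) / lam *
          qPochInf (-(t ^ 2 * lam ^ 2 * (1 - q) ^ 2 / q ^ 2)) (q ^ 2) *
          J1 q (ν + 1) lam (t / q)) x
      = x ^ (ν + 1) * qPochInf (-(x ^ 2 * lam ^ 2 * (1 - q) ^ 2)) (q ^ 2) *
          J1 q ν lam x := by
  intro x hx hxq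
  have h1q : (0:ℝ) < 1 - q := by linarith
  have hq0 : q ≠ 0 := hq.ne'
  have hx0 : x ≠ 0 := hx.ne'
  have hu0 : 0 < lam * x * (1 - q) := by positivity
  have hq2 : (0:ℝ) < q ^ 2 := by positivity
  have hq21 : q ^ 2 < 1 := by nlinarith
  have hr0 : (0:ℝ) < q ^ (2 * ν + 2) := Real.rpow_pos_of_pos hq _
  have hr1 : q ^ (2 * ν + 2) < 1 := Real.rpow_lt_one hq.le hq1 (by linarith)
  simp only [qDeriv]
  rw [show q * x / q = x by field_simp]
  rw [show (q * x) ^ 2 * lam ^ 2 * (1 - q) ^ 2 / q ^ 2 = x ^ 2 * lam ^ 2 * (1 - q) ^ 2 by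
    field_simp]
  rw [J1_eq q lam (ν + 1) (x / q) hq, J1_eq q lam (ν + 1) x hq, J1_eq q lam ν x hq]
  simp only [show lam * (x / q) * (1 - q) = lam * x * (1 - q) / q by field_simp]
  have hrr' : q ^ (2 * ν + 2) * q ^ 2 = q ^ (2 * (ν + 1) + 2) := by
    rw [← Real.rpow_natCast q 2, ← Real.rpow_add hq]
    norm_num
    ring_nf
  -- qPochInf manipulations
  have hcpos : (0:ℝ) < x ^ 2 * lam ^ 2 * (1 - q) ^ 2 / q ^ 2 := by positivity
  have hzlt : -(x ^ 2 * lam ^ 2 * (1 - q) ^ 2 / q ^ 2) < 1 := by linarith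
  have hshift1 : qPochInf (-(x ^ 2 * lam ^ 2 * (1 - q) ^ 2 / q ^ 2)) (q ^ 2)
      = (1 + x ^ 2 * lam ^ 2 * (1 - q) ^ 2 / q ^ 2) *
        qPochInf (-(x ^ 2 * lam ^ 2 * (1 - q) ^ 2)) (q ^ 2) := by
    rw [aux_tprod_shift hq2 hq21 hzlt,
      show (-(x ^ 2 * lam ^ 2 * (1 - q) ^ 2 / q ^ 2)) * q ^ 2
        = -(x ^ 2 * lam ^ 2 * (1 - q) ^ 2) by field_simp,
      show (1:ℝ) - -(x ^ 2 * lam ^ 2 * (1 - q) ^ 2 / q ^ 2)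
        = 1 + x ^ 2 * lam ^ 2 * (1 - q) ^ 2 / q ^ 2 by ring]
  have hshift2 : qPochInf (q ^ (2 * ν + 2)) (q ^ 2)
      = (1 - q ^ (2 * ν + 2)) * qPochInf (q ^ (2 * (ν + 1) + 2)) (q ^ 2) := by
    rw [aux_tprod_shift hq2 hq21 hr1, hrr']
  rw [hshift1, hshift2]
  -- rpow products
  rw [Real.mul_rpow hq.le hx.le,
    show q * (q * x) = q * q * x by ring,
    Real.mul_rpow (by positivity : (0:ℝ) ≤ q * q) hx.le,
    Real.mul_rpow hq.le hq.le]
  simp only [show x ^ 2 * lam ^ 2 * (1 - q) ^ 2 = (lam * x * (1 - q)) ^ 2 by ring]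
  -- use the key identity
  have hKEY := key q lam ν x hq hq1 hlam hν hx hxq
  set T1 := ∑' n : ℕ, ((-1 : ℝ) ^ n * (lam * x * (1 - q) / q) ^ (2 * (n : ℝ) + (ν + 1))) /
      (qPoch (q ^ 2) (q ^ 2) n * qPoch (q ^ (2 * (ν + 1) + 2)) (q ^ 2) n) with hT1
  set T2 := ∑' n : ℕ, ((-1 : ℝ) ^ n * (lam * x * (1 - q)) ^ (2 * (n : ℝ) + (ν + 1))) /
      (qPoch (q ^ 2) (q ^ 2) n * qPoch (q ^ (2 * (ν + 1) + 2)) (q ^ 2) n) with hT2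
  set T3 := ∑' n : ℕ, ((-1 : ℝ) ^ n * (lam * x * (1 - q)) ^ (2 * (n : ℝ) + ν)) /
      (qPoch (q ^ 2) (q ^ 2) n * qPoch (q ^ (2 * ν + 2)) (q ^ 2) n) with hT3
  have hscal : (lam * x * (1 - q)) * (1 - q ^ (2 * ν + 2)) ≠ 0 := by
    have : (0:ℝ) < 1 - q ^ (2 * ν + 2) := by linarith
    positivity
  have hT3eq : T3 = (q ^ (ν + 1) * (1 + (lam * x * (1 - q)) ^ 2 / q ^ 2) * T1
      - q ^ (ν + 1) * q ^ (ν + 1) * T2) / ((lam * x * (1 - q)) * (1 - q ^ (2 * ν + 2))) := by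
    rw [eq_div_iff hscal]
    linear_combination -hKEY
  rw [hT3eq]
  have hPA0 : qPochInf (q ^ 2) (q ^ 2) ≠ 0 := (aux_qPochInf_pos hq2 hq21 hq21).ne'
  have h1r : (1:ℝ) - q ^ (2 * ν + 2) ≠ 0 := by
    have : (0:ℝ) < 1 - q ^ (2 * ν + 2) := by linarith
    exact this.ne'
  have h1r' : (1:ℝ) - q ^ ((ν + 1) * 2) ≠ 0 := by convert h1r using 3; ring
  field_simp
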